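/- Fix a ∈ ℝⁿ with all entries positive and Σ_{i=1}^n arctan(a_i) = Θ where (n−2)π/2 ≤ Θ < nπ/2. Define Z(t a) = cos Θ · Y(t a) − sin Θ · X(t a) as a polynomial in t ∈ ℝ. Then t = 1 is a root of Z(t a), Z(t a) > 0 for all t > 1, and (d/dt) Z(t a) > 0 for all t ≥ 1. -/

import Mathlib

open Finset

/-- The `k`-th elementary symmetric polynomial of `a : Fin n → ℝ`. -/
noncomputable def esymm (n k : ℕ) (a : Fin n → ℝ) : ℝ :=
  ∑ s ∈ Finset.powersetCard k (Finset.univ : Finset (Fin n)), ∏ i ∈ s, a i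

/-- The `k`-th elementary symmetric polynomial of `a` with the `i`-th entry removed. -/
noncomputable def esymmDel (n k : ℕ) (a : Fin n → ℝ) (i : Fin n) : ℝ :=
  ∑ s ∈ Finset.powersetCard k ((Finset.univ : Finset (Fin n)).erase i), ∏ j ∈ s, a j


/-- X(λ) = Σ_{0≤2j≤n} (−1)^j σ_{2j}(λ). -/
noncomputable def Xpoly (n : ℕ) (a : Fin n → ℝ) : ℝ :=
  ∑ j ∈ Finset.range (n / 2 + 1), (-1 : ℝ) ^ j * esymm n (2 * j) a

/-- Y(λ) = Σ_{0≤2j+1≤n} (−1)^j σ_{2j+1}(λ). -/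
noncomputable def Ypoly (n : ℕ) (a : Fin n → ℝ) : ℝ :=
  ∑ j ∈ Finset.range ((n + 1) / 2), (-1 : ℝ) ^ j * esymm n (2 * j + 1) a

/-- X̂(λ) = Σ_{0≤2j≤n} (−1)^j (2j) σ_{2j}(λ). -/
noncomputable def Xhat (n : ℕ) (a : Fin n → ℝ) : ℝ :=
  ∑ j ∈ Finset.range (n / 2 + 1), (-1 : ℝ) ^ j * (2 * j : ℝ) * esymm n (2 * j) a

/-- Ŷ(λ) = Σ_{0≤2j+1≤n} (−1)^j (2j+1) σ_{2j+1}(λ). -/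
noncomputable def Yhat (n : ℕ) (a : Fin n → ℝ) : ℝ :=
  ∑ j ∈ Finset.range ((n + 1) / 2), (-1 : ℝ) ^ j * (2 * j + 1 : ℝ) * esymm n (2 * j + 1) a

/-- The Lagrangian phase H(λ) = Σ arctan λ_i. -/
noncomputable def phaseH (n : ℕ) (a : Fin n → ℝ) : ℝ :=
  ∑ i, Real.arctan (a i)

/- ### Auxiliary lemmas -/

lemma prod_one_add_I_aux {ι : Type*} [DecidableEq ι] (s : Finset ι) (c : ι → ℝ) :
    ∏ i ∈ s, (1 + Complex.I * (c i : ℂ))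
      = ∑ k ∈ range (s.card + 1), Complex.I ^ k *
          ∑ u ∈ powersetCard k s, ∏ i ∈ u, (c i : ℂ) := by
  have h1 : ∀ i ∈ s, (1 + Complex.I * (c i : ℂ)) = (Complex.I * c i + 1) := by
    intro i _; ring
  rw [Finset.prod_congr rfl h1, Finset.prod_add]
  rw [Finset.powerset_card_disjiUnion, Finset.sum_disjiUnion _ _ (s.pairwise_disjoint_powersetCard.set_pairwise _)]
  refine Finset.sum_congr rfl fun k _ => ?_
  rw [Finset.mul_sum]
  refine Finset.sum_congr rfl fun u hu => ?_
  have hcard : u.card = k := (Finset.mem_powersetCard.mp hu).2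
  rw [Finset.prod_const_one, mul_one, Finset.prod_mul_distrib, Finset.prod_const, hcard]

lemma one_add_I_polar_aux (x : ℝ) :
    (1 : ℂ) + Complex.I * (x : ℂ)
      = (Real.sqrt (1 + x ^ 2) : ℂ) * Complex.exp ((Real.arctan x : ℝ) * Complex.I) := by
  have h0 : (0 : ℝ) < Real.sqrt (1 + x ^ 2) := Real.sqrt_pos.mpr (by positivity)
  rw [Complex.exp_mul_I]
  have hc : Real.cos (Real.arctan x) = 1 / Real.sqrt (1 + x ^ 2) := Real.cos_arctan x
  have hs : Real.sin (Real.arctan x) = x / Real.sqrt (1 + x ^ 2) := Real.sin_arctan x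
  rw [show Complex.cos (Real.arctan x : ℂ) = ((Real.cos (Real.arctan x) : ℝ) : ℂ) from
      (Complex.ofReal_cos _).symm,
    show Complex.sin (Real.arctan x : ℂ) = ((Real.sin (Real.arctan x) : ℝ) : ℂ) from
      (Complex.ofReal_sin _).symm, hc, hs]
  have hne : (Real.sqrt (1 + x ^ 2) : ℂ) ≠ 0 := by
    exact_mod_cast Complex.ofReal_ne_zero.mpr (ne_of_gt h0)
  push_cast
  field_simp

lemma prod_polar_aux {ι : Type*} (s : Finset ι) (c : ι → ℝ) :
    ∏ i ∈ s, (1 + Complex.I * (c i : ℂ))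
      = ((∏ i ∈ s, Real.sqrt (1 + c i ^ 2) : ℝ) : ℂ) *
          Complex.exp (((∑ i ∈ s, Real.arctan (c i) : ℝ) : ℂ) * Complex.I) := by
  rw [Complex.ofReal_prod, Complex.ofReal_sum, Finset.sum_mul, Complex.exp_sum,
    ← Finset.prod_mul_distrib]
  exact Finset.prod_congr rfl fun i _ => one_add_I_polar_aux (c i)

lemma sum_range_even_odd_aux {M : Type*} [AddCommMonoid M] (f : ℕ → M) (n : ℕ) :
    ∑ k ∈ range (n + 1), f k
      = ∑ j ∈ range (n / 2 + 1), f (2 * j) + ∑ j ∈ range ((n + 1) / 2), f (2 * j + 1) := by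
  induction n with
  | zero => simp
  | succ n ih =>
    rw [Finset.sum_range_succ, ih]
    rcases Nat.even_or_odd (n + 1) with ⟨m, hm⟩ | ⟨m, hm⟩
    · rw [show (n + 1 + 1) / 2 = (n + 1) / 2 from by omega,
        show (n + 1) / 2 + 1 = (n / 2 + 1) + 1 from by omega,
        Finset.sum_range_succ (fun j => f (2 * j)) (n / 2 + 1),
        show 2 * (n / 2 + 1) = n + 1 from by omega]
      abel
    · rw [show (n + 1) / 2 + 1 = n / 2 + 1 from by omega,
        show (n + 1 + 1) / 2 = (n + 1) / 2 + 1 from by omega,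
        Finset.sum_range_succ (fun j => f (2 * j + 1)) ((n + 1) / 2),
        show 2 * ((n + 1) / 2) + 1 = n + 1 from by omega]
      abel

lemma XY_eq_prod_aux (n : ℕ) (c : Fin n → ℝ) :
    ((Xpoly n c : ℝ) : ℂ) + Complex.I * ((Ypoly n c : ℝ) : ℂ)
      = ∏ i, (1 + Complex.I * (c i : ℂ)) := by
  have h := prod_one_add_I_aux (Finset.univ : Finset (Fin n)) c
  rw [Finset.card_univ, Fintype.card_fin] at h
  rw [h, sum_range_even_odd_aux
    (fun k => Complex.I ^ k * ∑ u ∈ powersetCard k univ, ∏ i ∈ u, (c i : ℂ)) n]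
  have he : ∀ j : ℕ, Complex.I ^ (2 * j) = ((-1 : ℂ)) ^ j := fun j => by
    rw [pow_mul, Complex.I_sq]
  have ho : ∀ j : ℕ, Complex.I ^ (2 * j + 1) = ((-1 : ℂ)) ^ j * Complex.I := fun j => by
    rw [pow_succ, pow_mul, Complex.I_sq]
  simp only [he, ho, Xpoly, Ypoly, esymm]
  push_cast
  rw [Finset.mul_sum]
  congr 1
  exact Finset.sum_congr rfl fun j _ => by ring

lemma polar_im_aux (R H Θ : ℝ) :
    (Complex.exp (((-Θ : ℝ) : ℂ) * Complex.I) * ((R : ℂ) * Complex.exp ((H : ℝ) * Complex.I))).im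
      = R * Real.sin (H - Θ) := by
  rw [mul_left_comm, ← Complex.exp_add, ← add_mul, ← Complex.ofReal_add,
    show -Θ + H = H - Θ by ring, Complex.im_ofReal_mul, Complex.exp_ofReal_mul_I_im]

lemma polar_re_aux (R H Θ : ℝ) :
    (Complex.exp (((-Θ : ℝ) : ℂ) * Complex.I) * ((R : ℂ) * Complex.exp ((H : ℝ) * Complex.I))).re
      = R * Real.cos (H - Θ) := by
  rw [mul_left_comm, ← Complex.exp_add, ← add_mul, ← Complex.ofReal_add,
    show -Θ + H = H - Θ by ring, Complex.re_ofReal_mul, Complex.exp_ofReal_mul_I_re]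

lemma Z_im_aux (n : ℕ) (c : Fin n → ℝ) (Θ : ℝ) :
    (Complex.exp (((-Θ : ℝ) : ℂ) * Complex.I) * ∏ i, (1 + Complex.I * (c i : ℂ))).im
      = Real.cos Θ * Ypoly n c - Real.sin Θ * Xpoly n c := by
  rw [← XY_eq_prod_aux, Complex.mul_im, Complex.exp_ofReal_mul_I_re,
    Complex.exp_ofReal_mul_I_im, Real.cos_neg, Real.sin_neg]
  simp
  ring

lemma Z_eq_aux (n : ℕ) (c : Fin n → ℝ) (Θ : ℝ) :
    Real.cos Θ * Ypoly n c - Real.sin Θ * Xpoly n c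
      = (∏ i, Real.sqrt (1 + c i ^ 2)) * Real.sin ((∑ i, Real.arctan (c i)) - Θ) := by
  rw [← Z_im_aux, prod_polar_aux, polar_im_aux]

/-- For a positive vector a with H(a) = Θ, (n−2)π/2 ≤ Θ < nπ/2, the polynomial
Z(t a) = cos Θ · Y(t a) − sin Θ · X(t a) vanishes at t = 1, is positive for t > 1,
and has positive derivative for t ≥ 1. -/
theorem Zta_pos_and_deriv_pos (n : ℕ) (a : Fin n → ℝ) (ha : ∀ i, 0 < a i)
    (Θ : ℝ) (hΘa : phaseH n a = Θ)
    (hΘ1 : ((n : ℝ) - 2) * Real.pi / 2 ≤ Θ) (hΘ2 : Θ < (n : ℝ) * Real.pi / 2) :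
    (Real.cos Θ * Ypoly n (fun i => 1 * a i) - Real.sin Θ * Xpoly n (fun i => 1 * a i) = 0) ∧
    (∀ t : ℝ, 1 < t →
      0 < Real.cos Θ * Ypoly n (fun i => t * a i) - Real.sin Θ * Xpoly n (fun i => t * a i)) ∧
    (∀ t : ℝ, 1 ≤ t →
      0 < deriv (fun s : ℝ =>
        Real.cos Θ * Ypoly n (fun i => s * a i) - Real.sin Θ * Xpoly n (fun i => s * a i)) t) := by
  have pi_pos := Real.pi_pos
  -- n ≥ 1
  have hn : 0 < n := by
    by_contra h
    push_neg at h
    interval_cases n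
    · simp [phaseH] at hΘa
      rw [← hΘa] at hΘ2
      norm_num at hΘ2
  have hne : Nonempty (Fin n) := ⟨⟨0, hn⟩⟩
  have huniv : (Finset.univ : Finset (Fin n)).Nonempty := Finset.univ_nonempty
  -- Θ > 0
  have hΘpos : 0 < Θ := by
    rw [← hΘa, phaseH]
    refine Finset.sum_pos (fun i _ => ?_) huniv
    have := Real.arctan_strictMono (ha i)
    simpa using this
  -- monotonicity facts about H(t a)
  have hH_ge : ∀ t : ℝ, 1 ≤ t → Θ ≤ ∑ i, Real.arctan (t * a i) := by
    intro t ht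
    rw [← hΘa, phaseH]
    refine Finset.sum_le_sum fun i _ => Real.arctan_strictMono.monotone ?_
    nlinarith [ha i]
  have hH_gt : ∀ t : ℝ, 1 < t → Θ < ∑ i, Real.arctan (t * a i) := by
    intro t ht
    rw [← hΘa, phaseH]
    refine Finset.sum_lt_sum_of_nonempty huniv fun i _ => Real.arctan_strictMono ?_
    nlinarith [ha i]
  have hH_lt : ∀ t : ℝ, ∑ i, Real.arctan (t * a i) < (n : ℝ) * Real.pi / 2 := by
    intro t
    calc ∑ i, Real.arctan (t * a i) < ∑ _i : Fin n, Real.pi / 2 :=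
          Finset.sum_lt_sum_of_nonempty huniv fun i _ => Real.arctan_lt_pi_div_two _
      _ = (n : ℝ) * Real.pi / 2 := by
          rw [Finset.sum_const, Finset.card_univ, Fintype.card_fin, nsmul_eq_mul]; ring
  have hR_pos : ∀ (s : Finset (Fin n)) (c : Fin n → ℝ),
      0 < ∏ i ∈ s, Real.sqrt (1 + c i ^ 2) := by
    intro s c
    exact Finset.prod_pos fun i _ => Real.sqrt_pos.mpr (by positivity)
  refine ⟨?_, ?_, ?_⟩
  · -- Z(a) = 0
    rw [Z_eq_aux]
    have : ∑ i, Real.arctan (1 * a i) = Θ := by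
      rw [← hΘa, phaseH]; simp
    rw [this, sub_self, Real.sin_zero, mul_zero]
  · -- Z(ta) > 0 for t > 1
    intro t ht
    rw [Z_eq_aux]
    refine mul_pos (hR_pos _ _) (Real.sin_pos_of_pos_of_lt_pi ?_ ?_)
    · have := hH_gt t ht; linarith
    · have h1 := hH_lt t
      nlinarith
  · -- derivative positive for t ≥ 1
    intro t ht
    -- the complex-valued function P
    set E : ℂ := Complex.exp (((-Θ : ℝ) : ℂ) * Complex.I) with hE
    have hderivF : HasDerivAt
        (fun s : ℝ => Real.cos Θ * Ypoly n (fun i => s * a i)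
          - Real.sin Θ * Xpoly n (fun i => s * a i))
        ((E * ∑ i, (∏ j ∈ Finset.univ.erase i, (1 + Complex.I * ((t * a j : ℝ) : ℂ))) *
          (Complex.I * ((a i : ℝ) : ℂ))).im) t := by
      have hfac : ∀ i : Fin n, HasDerivAt (fun s : ℝ => 1 + Complex.I * ((s * a i : ℝ) : ℂ))
          (Complex.I * ((a i : ℝ) : ℂ)) t := by
        intro i
        have hr : HasDerivAt (fun s : ℝ => s * a i) (a i) t := by
          simpa using (hasDerivAt_id t).mul_const (a i)
        have hC : HasDerivAt (fun s : ℝ => ((s * a i : ℝ) : ℂ)) ((a i : ℝ) : ℂ) t := by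
          simpa only [Function.comp_def, Complex.ofRealCLM_apply] using
            Complex.ofRealCLM.hasFDerivAt.comp_hasDerivAt t hr
        exact (hC.const_mul Complex.I).const_add 1
      have hprod : HasDerivAt (fun s : ℝ => ∏ i, (1 + Complex.I * ((s * a i : ℝ) : ℂ)))
          (∑ i, (∏ j ∈ Finset.univ.erase i, (1 + Complex.I * ((t * a j : ℝ) : ℂ))) •
            (Complex.I * ((a i : ℝ) : ℂ))) t := by
        have h := HasDerivAt.finset_prod (u := Finset.univ) fun i _ => hfac i
        rwa [Finset.prod_fn] at h
      have hP : HasDerivAt (fun s : ℝ => E * ∏ i, (1 + Complex.I * ((s * a i : ℝ) : ℂ)))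
          (E * ∑ i, (∏ j ∈ Finset.univ.erase i, (1 + Complex.I * ((t * a j : ℝ) : ℂ))) *
            (Complex.I * ((a i : ℝ) : ℂ))) t := by
        simpa [smul_eq_mul] using hprod.const_mul E
      have hIm : HasDerivAt
          (fun s : ℝ => (E * ∏ i, (1 + Complex.I * ((s * a i : ℝ) : ℂ))).im)
          ((E * ∑ i, (∏ j ∈ Finset.univ.erase i, (1 + Complex.I * ((t * a j : ℝ) : ℂ))) *
            (Complex.I * ((a i : ℝ) : ℂ))).im) t := by
        simpa only [Function.comp_def, Complex.imCLM_apply] using Complex.imCLM.hasFDerivAt.comp_hasDerivAt t hP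
      have hfun : (fun s : ℝ => (E * ∏ i, (1 + Complex.I * ((s * a i : ℝ) : ℂ))).im)
          = fun s : ℝ => Real.cos Θ * Ypoly n (fun i => s * a i)
            - Real.sin Θ * Xpoly n (fun i => s * a i) := by
        funext s
        exact Z_im_aux n (fun i => s * a i) Θ
      rw [← hfun]
      exact hIm
    rw [hderivF.deriv]
    -- compute the imaginary part as a sum of positive terms
    rw [Finset.mul_sum]
    rw [Complex.im_sum]
    refine Finset.sum_pos (fun i _ => ?_) huniv
    have hterm : (E * ((∏ j ∈ Finset.univ.erase i, (1 + Complex.I * ((t * a j : ℝ) : ℂ))) *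
        (Complex.I * ((a i : ℝ) : ℂ)))).im
        = a i * ((∏ j ∈ Finset.univ.erase i, Real.sqrt (1 + (t * a j) ^ 2)) *
            Real.cos ((∑ j ∈ Finset.univ.erase i, Real.arctan (t * a j)) - Θ)) := by
      have h1 : E * ((∏ j ∈ Finset.univ.erase i, (1 + Complex.I * ((t * a j : ℝ) : ℂ))) *
          (Complex.I * ((a i : ℝ) : ℂ)))
          = ((a i : ℝ) : ℂ) * ((E * ∏ j ∈ Finset.univ.erase i,
              (1 + Complex.I * ((t * a j : ℝ) : ℂ))) * Complex.I) := by ring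
      rw [h1, Complex.im_ofReal_mul, Complex.mul_I_im,
        prod_polar_aux (Finset.univ.erase i) (fun j => t * a j), hE, polar_re_aux]
    rw [hterm]
    have hcos : 0 < Real.cos ((∑ j ∈ Finset.univ.erase i, Real.arctan (t * a j)) - Θ) := by
      set Hi := ∑ j ∈ Finset.univ.erase i, Real.arctan (t * a j) with hHi
      refine Real.cos_pos_of_mem_Ioo ⟨?_, ?_⟩
      · -- lower bound : Hi - Θ > -π/2
        have hsum : Real.arctan (t * a i) + Hi = ∑ j, Real.arctan (t * a j) := by
          rw [hHi]; exact Finset.add_sum_erase univ (fun j => Real.arctan (t * a j)) (Finset.mem_univ i)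
        have h2 := hH_ge t ht
        have h3 : Real.arctan (t * a i) < Real.pi / 2 := Real.arctan_lt_pi_div_two _
        linarith
      · -- upper bound : Hi - Θ < π/2
        rcases Finset.eq_empty_or_nonempty (Finset.univ.erase i) with he | hnE
        · rw [hHi, he, Finset.sum_empty]
          linarith
        · have hlt : Hi < ((n - 1 : ℕ) : ℝ) * (Real.pi / 2) := by
            rw [hHi]
            calc ∑ j ∈ Finset.univ.erase i, Real.arctan (t * a j)
                < ∑ _j ∈ Finset.univ.erase i, Real.pi / 2 :=
                  Finset.sum_lt_sum_of_nonempty hnE fun j _ => Real.arctan_lt_pi_div_two _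
              _ = ((n - 1 : ℕ) : ℝ) * (Real.pi / 2) := by
                  rw [Finset.sum_const, Finset.card_erase_of_mem (Finset.mem_univ i),
                    Finset.card_univ, Fintype.card_fin, nsmul_eq_mul]
          have hcast : ((n - 1 : ℕ) : ℝ) = (n : ℝ) - 1 := by
            rw [Nat.cast_sub hn, Nat.cast_one]
          rw [hcast] at hlt
          nlinarith
    have hR := hR_pos (Finset.univ.erase i) (fun j => t * a j)
    exact mul_pos (ha i) (mul_pos hR hcos)
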